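/- Let c, D, k > 0 be such that c⁴/(4D²) ≠ c² l(l+1) k² for every natural number l, and let γ ∈ [0,1]. For l ∈ ℕ define A_l(t) = cosh(tK_l) + (c²/(2DK_l))·sinh(tK_l) if c⁴/(4D²) > c² l(l+1) k² (with K_l = sqrt(c⁴/(4D²) − c² l(l+1)k²)) and A_l(t) = 0 otherwise; define B_l(t) = cos(tK_l') + (c²/(2DK_l'))·sin(tK_l') if c² l(l+1) k² > c⁴/(4D²) (with K_l' = sqrt(c² l(l+1)k² − c⁴/(4D²))) and B_l(t) = 0 otherwise. Let P_l denote the l-th Legendre polynomial, and let (C_l)_{l≥0} be nonnegative reals with ∑_{l=0}^∞ (2l+1)^{1+2γ} C_l < ∞. Then there exists a constant C > 0, depending only on c, D and k, such that for all t ≥ 0 and all Θ ∈ [0, π]: exp(−c²t/D) · ∑_{l=0}^∞ (2l+1) C_l · (A_l(t)² + B_l(t)²) · (1 − P_l(cos Θ)) ≤ C · (1 − cos Θ)^γ · ∑_{l=0}^∞ (2l+1)^{1+2γ} C_l. -/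

import Mathlib

open Real

/-- The subcritical frequency parameter `K_l`. -/
noncomputable def Kl (c D k : ℝ) (l : ℕ) : ℝ :=
  Real.sqrt (c^4/(4*D^2) - c^2*(l:ℝ)*((l:ℝ)+1)*k^2)

/-- The supercritical frequency parameter `K_l'`. -/
noncomputable def Kl' (c D k : ℝ) (l : ℕ) : ℝ :=
  Real.sqrt (c^2*(l:ℝ)*((l:ℝ)+1)*k^2 - c^4/(4*D^2))

/-- The subcritical (hyperbolic) amplitude factor `A_l(t)`, vanishing on the
supercritical branch. -/
noncomputable def Afun (c D k : ℝ) (l : ℕ) (t : ℝ) : ℝ :=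
  if c^2*(l:ℝ)*((l:ℝ)+1)*k^2 < c^4/(4*D^2) then
    Real.cosh (t * Kl c D k l) + (c^2/(2*D*Kl c D k l)) * Real.sinh (t * Kl c D k l)
  else 0

/-- The supercritical (oscillatory) amplitude factor `B_l(t)`, vanishing on the
subcritical branch. -/
noncomputable def Bfun (c D k : ℝ) (l : ℕ) (t : ℝ) : ℝ :=
  if c^4/(4*D^2) < c^2*(l:ℝ)*((l:ℝ)+1)*k^2 then
    Real.cos (t * Kl' c D k l) + (c^2/(2*D*Kl' c D k l)) * Real.sin (t * Kl' c D k l)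
  else 0

/-- The `l`-th Legendre polynomial on `ℝ`, via Rodrigues' formula. -/
noncomputable def legendreP (l : ℕ) (x : ℝ) : ℝ :=
  (1 / (2^l * (Nat.factorial l : ℝ))) * iteratedDeriv l (fun y : ℝ => (y^2 - 1)^l) x


open Polynomial


noncomputable def Qp (l j : ℕ) : ℝ[X] := derivative^[j] ((X^2 - 1 : ℝ[X])^l)


lemma Qp_succ (l j : ℕ) : Qp l (j+1) = derivative (Qp l j) :=
  Function.iterate_succ_apply' _ _ _

lemma C_mul_deriv_pred (l j : ℕ) (a : ℝ) :
    Polynomial.C ((j:ℝ)*a) * derivative (Qp l (j-1)) = Polynomial.C ((j:ℝ)*a) * Qp l j := by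
  cases j with
  | zero => simp
  | succ j => rw [Nat.succ_sub_one, ← Qp_succ]

lemma Qp_rec (l : ℕ) : ∀ j : ℕ,
    (X^2 - 1 : ℝ[X]) * Qp l (j+1)
      = Polynomial.C (2*(l:ℝ) - 2*j) * X * Qp l j
        + Polynomial.C ((j:ℝ)*(2*(l:ℝ) - j + 1)) * Qp l (j-1) := by
  intro j
  induction j with
  | zero =>
    simp only [Nat.cast_zero, mul_zero, sub_zero, zero_mul, Polynomial.C_0, add_zero]
    rcases Nat.eq_zero_or_pos l with hl | hl
    · subst hl; simp [Qp]
    · have h1 : Qp l 1 = derivative ((X^2 - 1 : ℝ[X])^l) := by rw [Qp]; rfl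
      have hQ0 : Qp l 0 = (X^2 - 1 : ℝ[X])^l := rfl
      have hder : derivative (X^2 - 1 : ℝ[X]) = Polynomial.C 2 * X := by
        simp [Polynomial.derivative_sub, Polynomial.derivative_X_pow]
        rw [← Polynomial.C_1, ← Polynomial.C_add]; norm_num
      have hC : (Polynomial.C (2*(l:ℝ)) : ℝ[X]) = Polynomial.C 2 * Polynomial.C (l:ℝ) := by
        rw [← Polynomial.C_mul]
      rw [h1, Polynomial.derivative_pow, hQ0, hder, hC]
      have hp : ((X^2 - 1 : ℝ[X])^(l-1)) * (X^2-1) = (X^2-1)^l := by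
        rw [← pow_succ, Nat.sub_add_cancel hl]
      calc (X^2 - 1 : ℝ[X]) * (Polynomial.C (l:ℝ) * (X^2-1)^(l-1) * (Polynomial.C 2 * X))
          = Polynomial.C 2 * Polynomial.C (l:ℝ) * X * ((X^2-1)^(l-1) * (X^2-1)) := by ring
        _ = _ := by rw [hp]
  | succ j ih =>
    have hd := congrArg derivative ih
    rw [Polynomial.derivative_mul, Polynomial.derivative_add, Polynomial.derivative_mul,
      Polynomial.derivative_mul, Polynomial.derivative_C, Polynomial.derivative_X, Polynomial.derivative_C_mul,
      C_mul_deriv_pred, ← Qp_succ, ← Qp_succ] at hd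
    have hder : derivative (X^2 - 1 : ℝ[X]) = Polynomial.C 2 * X := by
      simp [Polynomial.derivative_sub, Polynomial.derivative_X_pow]
      rw [← Polynomial.C_1, ← Polynomial.C_add]; norm_num
    rw [hder] at hd
    push_cast
    push_cast at hd
    simp only [map_sub, map_add, map_mul, map_one, map_ofNat] at hd ⊢
    linear_combination hd

lemma iteratedDeriv_eval (p : ℝ[X]) (n : ℕ) (x : ℝ) :
    iteratedDeriv n (fun y => p.eval y) x = (derivative^[n] p).eval x := by
  induction n generalizing p x with
  | zero => simp
  | succ n ih =>
    rw [iteratedDeriv_succ']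
    have : (deriv fun y => p.eval y) = fun y => (derivative p).eval y := by
      funext y; exact Polynomial.deriv p
    rw [this, ih, Function.iterate_succ_apply]

lemma legendreP_eq (l : ℕ) (x : ℝ) :
    legendreP l x = (1 / (2^l * (Nat.factorial l : ℝ))) * (Qp l l).eval x := by
  have : (fun y : ℝ => (y^2-1)^l) = fun y => ((X^2 - 1: ℝ[X])^l).eval y := by
    funext y; simp
  rw [legendreP, this, iteratedDeriv_eval]; rfl

lemma Qp_eval_key (l : ℕ) (a b : ℝ) (hab : (X^2 - 1 : ℝ[X]) = (X - Polynomial.C a)*(X - Polynomial.C b)) :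
    ∀ j, j ≤ l → ∃ s : ℝ[X], Qp l j = (X - Polynomial.C a)^(l-j) * s ∧
      s.eval a = (a-b)^l * (Nat.descFactorial l j : ℝ) := by
  intro j
  induction j with
  | zero =>
    intro _
    refine ⟨(X - Polynomial.C b)^l, ?_, ?_⟩
    · rw [Qp, Function.iterate_zero_apply, hab, mul_pow, Nat.sub_zero]
    · simp
  | succ j ih =>
    intro hj
    obtain ⟨s, hs, hv⟩ := ih (Nat.le_of_succ_le hj)
    have hlj : l - j = (l - (j+1)) + 1 := by omega
    refine ⟨Polynomial.C ((l:ℝ) - j) * s + (X - Polynomial.C a) * derivative s, ?_, ?_⟩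
    · rw [Qp_succ, hs, Polynomial.derivative_mul, Polynomial.derivative_pow,
        Polynomial.derivative_sub, Polynomial.derivative_X, Polynomial.derivative_C, sub_zero,
        mul_one, hlj]
      have h2 : ((l - (j+1) + 1 : ℕ) : ℝ) = (l:ℝ) - j := by
        rw [← hlj]; push_cast [Nat.le_of_succ_le hj]; ring
      rw [h2, Nat.add_sub_cancel]
      ring
    · have hdesc : (Nat.descFactorial l (j+1) : ℝ) = ((l:ℝ) - j) * (Nat.descFactorial l j : ℝ) := by
        rw [Nat.descFactorial_succ]
        have := Nat.le_of_succ_le hj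
        push_cast [this]; ring
      simp [hv, hdesc]
      rw [Nat.cast_sub (Nat.le_of_succ_le hj)]
      push_cast; ring

lemma Qp_eval_one (l : ℕ) : (Qp l l).eval 1 = 2^l * (Nat.factorial l : ℝ) := by
  obtain ⟨s, hs, hv⟩ := Qp_eval_key l 1 (-1) (by simp [map_neg, map_one]; ring) l le_rfl
  rw [hs, Nat.sub_self, pow_zero, one_mul, hv, Nat.descFactorial_self]
  norm_num

lemma Qp_eval_negone (l : ℕ) : (Qp l l).eval (-1) = (-2)^l * (Nat.factorial l : ℝ) := by
  obtain ⟨s, hs, hv⟩ := Qp_eval_key l (-1) 1 (by simp [map_neg, map_one]; ring) l le_rfl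
  rw [hs, Nat.sub_self, pow_zero, one_mul, hv, Nat.descFactorial_self]
  norm_num

lemma eadd1 (l : ℕ) : l+1+1 = l+2 := rfl
lemma eadd2 (l : ℕ) : l+2+1 = l+3 := rfl

lemma Qp_ode (l : ℕ) : (X^2-1 : ℝ[X]) * Qp l (l+2) + Polynomial.C 2 * X * Qp l (l+1)
    = Polynomial.C ((l:ℝ)*((l:ℝ)+1)) * Qp l l := by
  have h := Qp_rec l (l+1)
  simp only [Nat.add_sub_cancel] at h
  push_cast at h
  simp only [map_sub, map_add, map_mul, map_one, map_ofNat, Polynomial.C_eq_natCast, Nat.cast_ofNat,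
    eadd1, eadd2] at h ⊢
  linear_combination h

lemma Qp_ode' (l : ℕ) : (X^2-1 : ℝ[X]) * Qp l (l+3) + Polynomial.C 4 * X * Qp l (l+2)
    = Polynomial.C ((l:ℝ)*((l:ℝ)+1) - 2) * Qp l (l+1) := by
  have h := congrArg derivative (Qp_ode l)
  simp only [Polynomial.derivative_mul, Polynomial.derivative_add, Polynomial.derivative_sub,
    Polynomial.derivative_pow, Polynomial.derivative_X, Polynomial.derivative_one,
    Polynomial.derivative_C_mul, Polynomial.derivative_C, ← Qp_succ] at h
  simp only [map_sub, map_add, map_mul, map_one, map_ofNat, Polynomial.C_eq_natCast, Nat.cast_ofNat,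
    eadd1, eadd2] at h ⊢
  linear_combination h

lemma Fenergy (l : ℕ) :
    derivative (Polynomial.C ((l:ℝ)*((l:ℝ)+1)) * (Qp l l)^2 + (1 - X^2) * (Qp l (l+1))^2)
    = Polynomial.C 2 * X * (Qp l (l+1))^2 := by
  have h := Qp_ode l
  simp only [Polynomial.derivative_add, Polynomial.derivative_mul, Polynomial.derivative_sub,
    Polynomial.derivative_pow, Polynomial.derivative_X, Polynomial.derivative_one,
    Polynomial.derivative_C_mul, Polynomial.derivative_C, ← Qp_succ] at *
  simp only [map_sub, map_add, map_mul, map_one, map_ofNat, Polynomial.C_eq_natCast, Nat.cast_ofNat,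
    eadd1, eadd2] at *
  linear_combination (-2 * Qp l (l+1)) * h

lemma Genergy (l : ℕ) :
    derivative (Polynomial.C ((l:ℝ)*((l:ℝ)+1) - 2) * (Qp l (l+1))^2 + (1 - X^2) * (Qp l (l+2))^2)
    = Polynomial.C 6 * X * (Qp l (l+2))^2 := by
  have h := Qp_ode' l
  simp only [Polynomial.derivative_add, Polynomial.derivative_mul, Polynomial.derivative_sub,
    Polynomial.derivative_pow, Polynomial.derivative_X, Polynomial.derivative_one,
    Polynomial.derivative_C_mul, Polynomial.derivative_C, ← Qp_succ] at *
  simp only [map_sub, map_add, map_mul, map_one, map_ofNat, Polynomial.C_eq_natCast, Nat.cast_ofNat,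
    eadd1, eadd2] at *
  linear_combination (-2 * Qp l (l+2)) * h

lemma poly_le_max (P S : ℝ[X]) (a : ℝ) (ha : 0 ≤ a)
    (hP : derivative P = Polynomial.C a * X * S^2) :
    ∀ x ∈ Set.Icc (-1:ℝ) 1, P.eval x ≤ max (P.eval 1) (P.eval (-1)) := by
  have hderiv : ∀ y, deriv (fun z => P.eval z) y = a * y * (S.eval y)^2 := by
    intro y; rw [Polynomial.deriv, hP]; simp
  intro x hx
  rcases le_or_gt 0 x with h0 | h0
  · have hm : MonotoneOn (fun z => P.eval z) (Set.Icc 0 1) :=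
      monotoneOn_of_deriv_nonneg (convex_Icc 0 1) (P.continuousOn)
        (fun y _ => (P.differentiableAt).differentiableWithinAt)
        (fun y hy => by
          rw [interior_Icc] at hy
          rw [hderiv]
          have h1 : (0:ℝ) ≤ y := le_of_lt hy.1
          positivity)
    have := hm (Set.mem_Icc.mpr ⟨h0, hx.2⟩) (Set.mem_Icc.mpr ⟨zero_le_one, le_refl 1⟩) hx.2
    exact le_trans this (le_max_left _ _)
  · have hm : AntitoneOn (fun z => P.eval z) (Set.Icc (-1) 0) :=
      antitoneOn_of_deriv_nonpos (convex_Icc (-1) 0) (P.continuousOn)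
        (fun y _ => (P.differentiableAt).differentiableWithinAt)
        (fun y hy => by
          rw [interior_Icc] at hy
          rw [hderiv]
          have h1 : y ≤ 0 := le_of_lt hy.2
          have h2 : (0:ℝ) ≤ (S.eval y)^2 := sq_nonneg _
          nlinarith [mul_nonpos_of_nonneg_of_nonpos (mul_nonneg ha h2) h1])
    have := hm (Set.mem_Icc.mpr ⟨le_refl (-1:ℝ), by linarith⟩)
      (Set.mem_Icc.mpr ⟨hx.1, le_of_lt h0⟩) hx.1
    exact le_trans this (le_max_right _ _)

lemma neg_pow_sq (l : ℕ) : (((-2:ℝ))^l)^2 = ((2:ℝ)^l)^2 := by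
  rw [← pow_mul, ← pow_mul, mul_comm l 2, pow_mul, pow_mul]
  norm_num

/-- values of v at the endpoints -/
lemma v_eval_one (l : ℕ) : (Qp l (l+1)).eval 1 = (l:ℝ)*((l:ℝ)+1)/2 * (2^l * (Nat.factorial l : ℝ)) := by
  have h := congrArg (Polynomial.eval (1:ℝ)) (Qp_ode l)
  simp [Qp_eval_one] at h
  linarith

lemma v_eval_negone_sq (l : ℕ) : ((Qp l (l+1)).eval (-1))^2
    = ((l:ℝ)*((l:ℝ)+1)/2)^2 * ((2:ℝ)^l * (Nat.factorial l : ℝ))^2 := by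
  have h := congrArg (Polynomial.eval (-1:ℝ)) (Qp_ode l)
  simp [Qp_eval_negone] at h
  have h2 : (Qp l (l+1)).eval (-1) = -((l:ℝ)*((l:ℝ)+1)/2 * ((-2:ℝ)^l * (Nat.factorial l : ℝ))) := by
    linarith
  rw [h2]
  have hcalc : (-((l:ℝ)*((l:ℝ)+1)/2 * ((-2:ℝ)^l * (Nat.factorial l : ℝ))))^2
      = ((l:ℝ)*((l:ℝ)+1)/2)^2 * (((-2:ℝ)^l)^2 * ((Nat.factorial l : ℝ))^2) := by ring
  rw [hcalc, neg_pow_sq l]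
  ring

lemma u_sq_le (l : ℕ) (x : ℝ) (hx : x ∈ Set.Icc (-1:ℝ) 1) :
    ((Qp l l).eval x)^2 ≤ ((2:ℝ)^l * (Nat.factorial l : ℝ))^2 := by
  rcases Nat.eq_zero_or_pos l with hl | hl
  · subst hl; simp [Qp]
  · set B : ℝ := (2:ℝ)^l * (Nat.factorial l : ℝ) with hB
    set Fp : ℝ[X] := Polynomial.C ((l:ℝ)*((l:ℝ)+1)) * (Qp l l)^2 + (1 - X^2) * (Qp l (l+1))^2
    have hmax := poly_le_max Fp (Qp l (l+1)) 2 (by norm_num) (Fenergy l) x hx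
    have he1 : Fp.eval 1 = (l:ℝ)*((l:ℝ)+1) * B^2 := by
      simp only [Fp, eval_add, eval_mul, eval_pow, eval_sub, eval_one, eval_C, eval_X,
        Qp_eval_one, hB]
      norm_num
    have he2 : Fp.eval (-1) = (l:ℝ)*((l:ℝ)+1) * B^2 := by
      simp only [Fp, eval_add, eval_mul, eval_pow, eval_sub, eval_one, eval_C, eval_X,
        Qp_eval_negone, hB]
      have hnp : ((-2:ℝ)^l * (Nat.factorial l:ℝ))^2 = ((2:ℝ)^l * (Nat.factorial l:ℝ))^2 := by
        rw [mul_pow, mul_pow, neg_pow_sq]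
      linear_combination ((l:ℝ)*((l:ℝ)+1)) * hnp
    rw [he1, he2, max_self] at hmax
    have hev : Fp.eval x = (l:ℝ)*((l:ℝ)+1) * ((Qp l l).eval x)^2
        + (1 - x^2) * ((Qp l (l+1)).eval x)^2 := by simp [Fp]
    have hx2 : 1 - x^2 ≥ 0 := by
      rcases hx with ⟨h1, h2⟩; nlinarith
    have hll : (0:ℝ) < (l:ℝ)*((l:ℝ)+1) := by
      have : (1:ℝ) ≤ (l:ℝ) := by exact_mod_cast hl
      nlinarith
    nlinarith [sq_nonneg ((Qp l (l+1)).eval x)]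

lemma v_sq_le (l : ℕ) (x : ℝ) (hx : x ∈ Set.Icc (-1:ℝ) 1) :
    ((Qp l (l+1)).eval x)^2 ≤ ((l:ℝ)*((l:ℝ)+1)/2)^2 * ((2:ℝ)^l * (Nat.factorial l : ℝ))^2 := by
  match l with
  | 0 =>
    have : Qp 0 1 = 0 := by
      simp [Qp, Function.iterate_one]
    simp [this]
  | 1 =>
    have h1 : Qp 1 2 = Polynomial.C 2 := by
      have : ((X^2 - 1 : ℝ[X])^1) = X^2 - 1 := pow_one _
      simp only [Qp, this]
      rw [Function.iterate_succ_apply, Function.iterate_one]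
      simp [Polynomial.derivative_sub, Polynomial.derivative_X_pow]
      rw [← Polynomial.C_1, ← Polynomial.C_add]; norm_num
    rw [show (1:ℕ)+1 = 2 from rfl, h1]
    norm_num [Nat.factorial]
  | (n+2) =>
    set l := n + 2
    have hl2 : (2:ℝ) ≤ (l:ℝ) := by exact_mod_cast Nat.le_add_left 2 n
    set B : ℝ := (2:ℝ)^l * (Nat.factorial l : ℝ) with hB
    set μ : ℝ := (l:ℝ)*((l:ℝ)+1) - 2 with hμ
    have hμpos : 0 < μ := by nlinarith
    set Gp : ℝ[X] := Polynomial.C μ * (Qp l (l+1))^2 + (1 - X^2) * (Qp l (l+2))^2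
    have hmax := poly_le_max Gp (Qp l (l+2)) 6 (by norm_num) (Genergy l) x hx
    have he1 : Gp.eval 1 = μ * (((l:ℝ)*((l:ℝ)+1)/2)^2 * B^2) := by
      simp only [Gp, eval_add, eval_mul, eval_pow, eval_sub, eval_one, eval_C, eval_X,
        v_eval_one, hB]
      ring
    have he2 : Gp.eval (-1) = μ * (((l:ℝ)*((l:ℝ)+1)/2)^2 * B^2) := by
      simp only [Gp, eval_add, eval_mul, eval_pow, eval_sub, eval_one, eval_C, eval_X, hB]
      rw [v_eval_negone_sq]
      ring
    rw [he1, he2, max_self] at hmax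
    have hev : Gp.eval x = μ * ((Qp l (l+1)).eval x)^2
        + (1 - x^2) * ((Qp l (l+2)).eval x)^2 := by
      simp [Gp]
    have hx2 : 1 - x^2 ≥ 0 := by rcases hx with ⟨h1, h2⟩; nlinarith
    nlinarith [sq_nonneg ((Qp l (l+2)).eval x), mul_nonneg hx2 (sq_nonneg ((Qp l (l+2)).eval x))]

lemma Bl_pos (l : ℕ) : (0:ℝ) < 2^l * (Nat.factorial l : ℝ) := by
  have := l.factorial_pos
  positivity

lemma abs_le_of_sq_le' {v M : ℝ} (hM : 0 ≤ M) (h : v^2 ≤ M^2) : |v| ≤ M := by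
  have h1 : Real.sqrt (v^2) ≤ Real.sqrt (M^2) := Real.sqrt_le_sqrt h
  rwa [Real.sqrt_sq_eq_abs, Real.sqrt_sq hM] at h1

lemma legendreP_one (l : ℕ) : legendreP l 1 = 1 := by
  rw [legendreP_eq, Qp_eval_one]
  field_simp

lemma legendreP_abs_le (l : ℕ) (x : ℝ) (hx : x ∈ Set.Icc (-1:ℝ) 1) : |legendreP l x| ≤ 1 := by
  have hB := Bl_pos l
  have h := u_sq_le l x hx
  rw [legendreP_eq]
  rw [abs_mul, abs_of_pos (by positivity : (0:ℝ) < 1 / (2^l * (Nat.factorial l : ℝ)))]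
  have habs : |(Qp l l).eval x| ≤ 2^l * (Nat.factorial l : ℝ) := abs_le_of_sq_le' (le_of_lt hB) h
  rw [div_mul_eq_mul_div, one_mul, div_le_one hB]
  exact habs

lemma legendreP_lip (l : ℕ) (x : ℝ) (hx : x ∈ Set.Icc (-1:ℝ) 1) :
    1 - legendreP l x ≤ (l:ℝ)*((l:ℝ)+1)/2 * (1-x) := by
  have hB := Bl_pos l
  set B : ℝ := 2^l * (Nat.factorial l : ℝ) with hBdef
  have hfun : legendreP l = fun y => (1/B) * (Qp l l).eval y := funext (legendreP_eq l)
  have hL : (0:ℝ) ≤ (l:ℝ)*((l:ℝ)+1)/2 := by positivity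
  have hf : ∀ y ∈ Set.Icc (-1:ℝ) 1, HasDerivWithinAt (legendreP l)
      ((1/B) * (Qp l (l+1)).eval y) (Set.Icc (-1:ℝ) 1) y := by
    intro y _
    rw [hfun]
    have h1 : HasDerivAt (fun y => (1/B) * (Qp l l).eval y)
        ((1/B) * ((Qp l l).derivative.eval y)) y := ((Qp l l).hasDerivAt y).const_mul (1/B)
    rw [← Qp_succ] at h1
    exact h1.hasDerivWithinAt
  have hbound : ∀ y ∈ Set.Icc (-1:ℝ) 1, ‖(1/B) * (Qp l (l+1)).eval y‖ ≤ (l:ℝ)*((l:ℝ)+1)/2 := by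
    intro y hy
    have hv := v_sq_le l y hy
    have habs : |(Qp l (l+1)).eval y| ≤ (l:ℝ)*((l:ℝ)+1)/2 * B := by
      apply abs_le_of_sq_le' (by positivity)
      calc ((Qp l (l+1)).eval y)^2 ≤ ((l:ℝ)*((l:ℝ)+1)/2)^2 * B^2 := hv
        _ = ((l:ℝ)*((l:ℝ)+1)/2 * B)^2 := by ring
    rw [Real.norm_eq_abs, abs_mul, abs_of_pos (by positivity : (0:ℝ) < 1/B)]
    calc 1/B * |(Qp l (l+1)).eval y| ≤ 1/B * ((l:ℝ)*((l:ℝ)+1)/2 * B) := by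
          apply mul_le_mul_of_nonneg_left habs (by positivity)
      _ = (l:ℝ)*((l:ℝ)+1)/2 := by field_simp
  have key := (convex_Icc (-1:ℝ) 1).norm_image_sub_le_of_norm_hasDerivWithin_le hf hbound
    hx (Set.mem_Icc.mpr ⟨by norm_num, le_refl 1⟩)
  rw [legendreP_one, Real.norm_eq_abs, Real.norm_eq_abs] at key
  have h1 : 1 - legendreP l x ≤ |1 - legendreP l x| := le_abs_self _
  have h2 : |1 - x| = 1 - x := abs_of_nonneg (by linarith [hx.2])
  rw [h2] at key
  linarith

lemma interp_lemma {z a b γ : ℝ} (hz : 0 ≤ z) (ha : 0 ≤ a) (hb : 0 ≤ b)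
    (hγ0 : 0 ≤ γ) (hγ1 : γ ≤ 1) (h1 : z ≤ a) (h2 : z ≤ b) :
    z ≤ a^(1-γ) * b^γ := by
  rcases eq_or_lt_of_le hz with h0 | h0
  · rw [← h0]
    positivity
  · calc z = z^(1-γ) * z^γ := by
          rw [← Real.rpow_add h0]; norm_num
      _ ≤ a^(1-γ) * b^γ :=
        mul_le_mul (Real.rpow_le_rpow hz h1 (by linarith)) (Real.rpow_le_rpow hz h2 hγ0)
          (Real.rpow_nonneg hz γ) (Real.rpow_nonneg ha _)

lemma legendre_est (l : ℕ) (γ : ℝ) (hγ0 : 0 ≤ γ) (hγ1 : γ ≤ 1) (x : ℝ)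
    (hx : x ∈ Set.Icc (-1:ℝ) 1) :
    1 - legendreP l x ≤ 2 * (2*(l:ℝ)+1)^(2*γ) * (1-x)^γ := by
  have habs := legendreP_abs_le l x hx
  have hz : 0 ≤ 1 - legendreP l x := by
    have := abs_le.mp habs
    linarith [this.2]
  have hz2 : 1 - legendreP l x ≤ 2 := by
    have := abs_le.mp habs
    linarith [this.1]
  have hlip := legendreP_lip l x hx
  set L : ℝ := (l:ℝ)*((l:ℝ)+1)/2 with hLdef
  have hL : 0 ≤ L := by positivity
  have h1x : (0:ℝ) ≤ 1 - x := by linarith [hx.2]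
  have step1 : 1 - legendreP l x ≤ (2:ℝ)^(1-γ) * (L*(1-x))^γ :=
    interp_lemma hz (by norm_num) (by positivity) hγ0 hγ1 hz2 hlip
  have step2 : (L*(1-x))^γ = L^γ * (1-x)^γ := Real.mul_rpow hL h1x
  have ha : (0:ℝ) < 2*(l:ℝ)+1 := by positivity
  have hLa : L ≤ (2*(l:ℝ)+1)^(2:ℕ) := by
    rw [hLdef]; nlinarith [sq_nonneg (l:ℝ)]
  have step3 : L^γ ≤ (2*(l:ℝ)+1)^(2*γ) := by
    calc L^γ ≤ ((2*(l:ℝ)+1)^(2:ℕ))^γ := Real.rpow_le_rpow hL hLa hγ0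
      _ = (2*(l:ℝ)+1)^(2*γ) := by
        rw [← Real.rpow_natCast (2*(l:ℝ)+1) 2, ← Real.rpow_mul (le_of_lt ha)]
        norm_num
  have step4 : (2:ℝ)^(1-γ) ≤ 2 := by
    calc (2:ℝ)^(1-γ) ≤ (2:ℝ)^(1:ℝ) :=
        Real.rpow_le_rpow_of_exponent_le one_le_two (by linarith)
      _ = 2 := Real.rpow_one 2
  calc 1 - legendreP l x ≤ (2:ℝ)^(1-γ) * (L^γ * (1-x)^γ) := by rwa [step2] at step1
    _ ≤ 2 * ((2*(l:ℝ)+1)^(2*γ) * (1-x)^γ) := by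
        apply mul_le_mul step4
        · apply mul_le_mul_of_nonneg_right step3 (Real.rpow_nonneg h1x γ)
        · positivity
        · norm_num
    _ = 2 * (2*(l:ℝ)+1)^(2*γ) * (1-x)^γ := by ring

lemma amp_bound (c D k : ℝ) (hc : 0 < c) (hD : 0 < D) (hk : 0 < k)
    (hnd : ∀ l : ℕ, c^4/(4*D^2) ≠ c^2*(l:ℝ)*((l:ℝ)+1)*k^2) :
    ∃ M : ℝ, 0 < M ∧ ∀ (l : ℕ) (t : ℝ), 0 ≤ t →
      Real.exp (-c^2*t/D) * ((Afun c D k l t)^2 + (Bfun c D k l t)^2) ≤ M := by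
  have hmul : ∀ a b : ℝ, 0 ≤ a → a ≤ b → c^2*a*(a+1)*k^2 ≤ c^2*b*(b+1)*k^2 := by
    intro a b ha hab
    have h2 : (0:ℝ) ≤ c^2*k^2 := by positivity
    have h3 : a*(a+1) ≤ b*(b+1) := by nlinarith
    nlinarith [mul_le_mul_of_nonneg_left h3 h2]
  have hex : ∃ n : ℕ, c^4/(4*D^2) < c^2*(n:ℝ)*((n:ℝ)+1)*k^2 := by
    obtain ⟨n, hn⟩ := exists_nat_ge (c^4/(4*D^2*(c^2*k^2)))
    refine ⟨n+1, ?_⟩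
    have h1 : c^4/(4*D^2) = (c^2*k^2) * (c^4/(4*D^2*(c^2*k^2))) := by
      field_simp
    rw [h1]
    have h2 : (0:ℝ) < c^2*k^2 := by positivity
    have h3 : c^4/(4*D^2*(c^2*k^2)) < ((n:ℝ)+1)*(((n:ℝ)+1)+1) := by
      have : (0:ℝ) ≤ (n:ℝ) := Nat.cast_nonneg n
      nlinarith
    push_cast
    nlinarith
  obtain ⟨l₁, hspec, hmin⟩ : ∃ n : ℕ, (c^4/(4*D^2) < c^2*(n:ℝ)*((n:ℝ)+1)*k^2) ∧
      ∀ m : ℕ, m < n → ¬(c^4/(4*D^2) < c^2*(m:ℝ)*((m:ℝ)+1)*k^2) :=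
    ⟨Nat.find hex, Nat.find_spec hex, fun m hm => Nat.find_min hex hm⟩
  have hsub : ∀ l : ℕ, l < l₁ → c^2*(l:ℝ)*((l:ℝ)+1)*k^2 < c^4/(4*D^2) := by
    intro l hl
    have h1 := hmin l hl
    rcases lt_trichotomy (c^2*(l:ℝ)*((l:ℝ)+1)*k^2) (c^4/(4*D^2)) with h | h | h
    · exact h
    · exact absurd h.symm (hnd l)
    · exact absurd h h1
  have hl₁pos : 0 < l₁ := by
    rcases Nat.eq_zero_or_pos l₁ with h | h
    · exfalso
      rw [h] at hspec
      push_cast at hspec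
      have : (0:ℝ) < c^4/(4*D^2) := by positivity
      nlinarith
    · exact h
  have hsup : ∀ l : ℕ, l₁ ≤ l → c^4/(4*D^2) < c^2*(l:ℝ)*((l:ℝ)+1)*k^2 := by
    intro l hl
    have hcast : (l₁:ℝ) ≤ (l:ℝ) := Nat.cast_le.mpr hl
    have := hmul (l₁:ℝ) (l:ℝ) (Nat.cast_nonneg _) hcast
    linarith
  set lm := l₁ - 1 with hlmdef
  have hlm : lm < l₁ := Nat.sub_lt hl₁pos one_pos
  have hKm_pos : 0 < Kl c D k lm := by
    rw [Kl, Real.sqrt_pos]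
    have := hsub lm hlm
    linarith
  have hK'_pos : 0 < Kl' c D k l₁ := by
    rw [Kl', Real.sqrt_pos]
    linarith [hspec]
  have h2DKm : (0:ℝ) < 2*D*Kl c D k lm := by
    have : (0:ℝ) < 2*D := by linarith
    exact mul_pos this hKm_pos
  have h2DK' : (0:ℝ) < 2*D*Kl' c D k l₁ := by
    have : (0:ℝ) < 2*D := by linarith
    exact mul_pos this hK'_pos
  set β := c^2/(2*D*Kl c D k lm) with hβdef
  set β' := c^2/(2*D*Kl' c D k l₁) with hβ'def
  have hβpos : 0 < β := div_pos (by positivity) h2DKm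
  have hβ'pos : 0 < β' := div_pos (by positivity) h2DK'
  refine ⟨(1+β)^2 + (1+β')^2, by positivity, ?_⟩
  intro l t ht
  rcases lt_or_ge l l₁ with hl | hl
  · -- subcritical branch : Bfun = 0
    have hcond : c^2*(l:ℝ)*((l:ℝ)+1)*k^2 < c^4/(4*D^2) := hsub l hl
    have hB0 : Bfun c D k l t = 0 := by rw [Bfun, if_neg (by linarith)]
    have hA : Afun c D k l t
        = Real.cosh (t * Kl c D k l) + (c^2/(2*D*Kl c D k l)) * Real.sinh (t * Kl c D k l) := by
      rw [Afun, if_pos hcond]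
    have hKl_pos : 0 < Kl c D k l := by rw [Kl, Real.sqrt_pos]; linarith
    have hKlow : Kl c D k lm ≤ Kl c D k l := by
      apply Real.sqrt_le_sqrt
      have hle : l ≤ lm := by omega
      have hcast : (l:ℝ) ≤ (lm:ℝ) := Nat.cast_le.mpr hle
      have := hmul (l:ℝ) (lm:ℝ) (Nat.cast_nonneg _) hcast
      linarith
    have hKup : Kl c D k l ≤ c^2/(2*D) := by
      rw [Kl, show c^4/(4*D^2) = (c^2/(2*D))^2 by field_simp; ring]
      calc Real.sqrt ((c^2/(2*D))^2 - c^2*(l:ℝ)*((l:ℝ)+1)*k^2) ≤ Real.sqrt ((c^2/(2*D))^2) := by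
            apply Real.sqrt_le_sqrt
            have : (0:ℝ) ≤ c^2*(l:ℝ)*((l:ℝ)+1)*k^2 := by positivity
            linarith
        _ = c^2/(2*D) := Real.sqrt_sq (by positivity)
    have h2DKl : (0:ℝ) < 2*D*Kl c D k l := by
      have : (0:ℝ) < 2*D := by linarith
      exact mul_pos this hKl_pos
    have hβl : c^2/(2*D*Kl c D k l) ≤ β := by
      rw [hβdef]
      apply div_le_div_of_nonneg_left (by positivity) h2DKm
      exact mul_le_mul_of_nonneg_left hKlow (by linarith)
    have hβl_pos : 0 < c^2/(2*D*Kl c D k l) := div_pos (by positivity) h2DKl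
    set K := Kl c D k l with hKdef
    have htK : 0 ≤ t * K := mul_nonneg ht (le_of_lt hKl_pos)
    have heK : (0:ℝ) < Real.exp (t*K) := Real.exp_pos _
    have hemK : (0:ℝ) < Real.exp (-(t*K)) := Real.exp_pos _
    have hee : Real.exp (-(t*K)) ≤ Real.exp (t*K) := Real.exp_le_exp.mpr (by linarith)
    have hcosh : Real.cosh (t*K) ≤ Real.exp (t*K) := by rw [Real.cosh_eq]; linarith
    have hsinh : Real.sinh (t*K) ≤ Real.exp (t*K) := by rw [Real.sinh_eq]; linarith
    have hsinh0 : 0 ≤ Real.sinh (t*K) := by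
      have h := Real.sinh_le_sinh.mpr htK
      rwa [Real.sinh_zero] at h
    have hcosh0 : 0 ≤ Real.cosh (t*K) := by rw [Real.cosh_eq]; positivity
    have hApos : 0 ≤ Afun c D k l t := by
      rw [hA]
      have := mul_nonneg (le_of_lt hβl_pos) hsinh0
      linarith
    have hAle : Afun c D k l t ≤ (1+β) * Real.exp (t*K) := by
      rw [hA]
      have h1 : (c^2/(2*D*K)) * Real.sinh (t*K) ≤ β * Real.sinh (t*K) :=
        mul_le_mul_of_nonneg_right hβl hsinh0
      have h2 : β * Real.sinh (t*K) ≤ β * Real.exp (t*K) :=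
        mul_le_mul_of_nonneg_left hsinh (le_of_lt hβpos)
      have : (1+β) * Real.exp (t*K) = Real.exp (t*K) + β * Real.exp (t*K) := by ring
      rw [this]
      linarith
    have hA2 : (Afun c D k l t)^2 ≤ (1+β)^2 * Real.exp (t*K)^2 := by
      have := pow_le_pow_left₀ hApos hAle 2
      calc (Afun c D k l t)^2 ≤ ((1+β) * Real.exp (t*K))^2 := this
        _ = (1+β)^2 * Real.exp (t*K)^2 := by ring
    have hexp2 : Real.exp (-c^2*t/D) * Real.exp (t*K)^2 ≤ 1 := by
      have hsq : Real.exp (t*K)^2 = Real.exp (2*(t*K)) := by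
        rw [show (2:ℝ)*(t*K) = t*K + t*K by ring, Real.exp_add]; ring
      rw [hsq, ← Real.exp_add, Real.exp_le_one_iff]
      have h4 := mul_le_mul_of_nonneg_left hKup (by linarith : (0:ℝ) ≤ 2*t)
      have h5 : 2*t*(c^2/(2*D)) = c^2*t/D := by field_simp
      have h6 : -c^2*t/D = -(c^2*t/D) := by ring
      linarith
    have hfinal : Real.exp (-c^2*t/D) * (Afun c D k l t)^2 ≤ (1+β)^2 := by
      calc Real.exp (-c^2*t/D) * (Afun c D k l t)^2
          ≤ Real.exp (-c^2*t/D) * ((1+β)^2 * Real.exp (t*K)^2) :=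
            mul_le_mul_of_nonneg_left hA2 (le_of_lt (Real.exp_pos _))
        _ = (1+β)^2 * (Real.exp (-c^2*t/D) * Real.exp (t*K)^2) := by ring
        _ ≤ (1+β)^2 * 1 := mul_le_mul_of_nonneg_left hexp2 (by positivity)
        _ = (1+β)^2 := mul_one _
    rw [hB0]
    have : Real.exp (-c^2*t/D) * ((Afun c D k l t)^2 + 0^2)
        = Real.exp (-c^2*t/D) * (Afun c D k l t)^2 := by ring
    rw [this]
    linarith [hfinal, sq_nonneg (1+β')]
  · -- supercritical branch : Afun = 0
    have hcond : c^4/(4*D^2) < c^2*(l:ℝ)*((l:ℝ)+1)*k^2 := hsup l hl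
    have hA0 : Afun c D k l t = 0 := by rw [Afun, if_neg (by linarith)]
    have hB : Bfun c D k l t
        = Real.cos (t * Kl' c D k l) + (c^2/(2*D*Kl' c D k l)) * Real.sin (t * Kl' c D k l) := by
      rw [Bfun, if_pos hcond]
    have hK'l_pos : 0 < Kl' c D k l := by rw [Kl', Real.sqrt_pos]; linarith
    have hK'low : Kl' c D k l₁ ≤ Kl' c D k l := by
      apply Real.sqrt_le_sqrt
      have hcast : (l₁:ℝ) ≤ (l:ℝ) := Nat.cast_le.mpr hl
      have := hmul (l₁:ℝ) (l:ℝ) (Nat.cast_nonneg _) hcast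
      linarith
    have h2DK'l : (0:ℝ) < 2*D*Kl' c D k l := by
      have : (0:ℝ) < 2*D := by linarith
      exact mul_pos this hK'l_pos
    have hβ'l : c^2/(2*D*Kl' c D k l) ≤ β' := by
      rw [hβ'def]
      apply div_le_div_of_nonneg_left (by positivity) h2DK'
      exact mul_le_mul_of_nonneg_left hK'low (by linarith)
    have hβ'l_pos : 0 < c^2/(2*D*Kl' c D k l) := div_pos (by positivity) h2DK'l
    have hBabs : |Bfun c D k l t| ≤ 1 + β' := by
      rw [hB]
      calc |Real.cos (t * Kl' c D k l) + (c^2/(2*D*Kl' c D k l)) * Real.sin (t * Kl' c D k l)|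
          ≤ |Real.cos (t * Kl' c D k l)| + |(c^2/(2*D*Kl' c D k l)) * Real.sin (t * Kl' c D k l)| :=
            abs_add_le _ _
        _ ≤ 1 + β' := by
            rw [abs_mul, abs_of_pos hβ'l_pos]
            have h1 := Real.abs_cos_le_one (t * Kl' c D k l)
            have h2 := Real.abs_sin_le_one (t * Kl' c D k l)
            have h3 : c^2/(2*D*Kl' c D k l) * |Real.sin (t * Kl' c D k l)|
                ≤ c^2/(2*D*Kl' c D k l) * 1 :=
              mul_le_mul_of_nonneg_left h2 (le_of_lt hβ'l_pos)
            rw [mul_one] at h3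
            linarith
    have hB2 : (Bfun c D k l t)^2 ≤ (1+β')^2 := by
      rw [← sq_abs]
      exact pow_le_pow_left₀ (abs_nonneg _) hBabs 2
    have hexple : Real.exp (-c^2*t/D) ≤ 1 := by
      rw [Real.exp_le_one_iff]
      have h8 : (0:ℝ) ≤ c^2*t/D := by positivity
      have h9 : -c^2*t/D = -(c^2*t/D) := by ring
      linarith
    rw [hA0]
    have heppos : (0:ℝ) < Real.exp (-c^2*t/D) := Real.exp_pos _
    have : Real.exp (-c^2*t/D) * (0^2 + (Bfun c D k l t)^2)
        = Real.exp (-c^2*t/D) * (Bfun c D k l t)^2 := by ring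
    rw [this]
    have h7 : Real.exp (-c^2*t/D) * (Bfun c D k l t)^2 ≤ 1 * (1+β')^2 := by
      apply mul_le_mul hexple hB2 (sq_nonneg _) zero_le_one
    linarith [h7, sq_nonneg (1+β)]

/-- series-level form of Corollary 5 (Hölder continuity of order `γ` in
the spatial variable of the solution of the spherical hyperbolic diffusion equation,
uniformly in time). -/
theorem stmt_18 (c D k : ℝ) (hc : 0 < c) (hD : 0 < D) (hk : 0 < k)
    (hnd : ∀ l : ℕ, c^4/(4*D^2) ≠ c^2*(l:ℝ)*((l:ℝ)+1)*k^2)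
    (γ : ℝ) (hγ : γ ∈ Set.Icc (0:ℝ) 1)
    (C : ℕ → ℝ) (hC : ∀ l, 0 ≤ C l)
    (hsum : Summable (fun l : ℕ => (2*(l:ℝ)+1)^(1+2*γ) * C l)) :
    ∃ C₀ : ℝ, 0 < C₀ ∧ ∀ t : ℝ, 0 ≤ t → ∀ Θ : ℝ, Θ ∈ Set.Icc (0:ℝ) π →
      Real.exp (-c^2*t/D) *
        ∑' l : ℕ, (2*(l:ℝ)+1) * C l *
          ((Afun c D k l t)^2 + (Bfun c D k l t)^2) * (1 - legendreP l (Real.cos Θ))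
      ≤ C₀ * (1 - Real.cos Θ)^γ *
          ∑' l : ℕ, (2*(l:ℝ)+1)^(1+2*γ) * C l := by
  obtain ⟨M, hM, hamp⟩ := amp_bound c D k hc hD hk hnd
  obtain ⟨hγ0, hγ1⟩ := hγ
  refine ⟨2*M, by linarith, ?_⟩
  intro t ht Θ _
  set x := Real.cos Θ with hxdef
  have hx : x ∈ Set.Icc (-1:ℝ) 1 := ⟨Real.neg_one_le_cos Θ, Real.cos_le_one Θ⟩
  have h1x : (0:ℝ) ≤ 1 - x := by linarith [hx.2]
  have hEpos : (0:ℝ) < Real.exp (-c^2*t/D) := Real.exp_pos _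
  have hterm : ∀ l : ℕ, Real.exp (-c^2*t/D) * ((2*(l:ℝ)+1) * C l *
        ((Afun c D k l t)^2 + (Bfun c D k l t)^2) * (1 - legendreP l x))
      ≤ (2*M * (1-x)^γ) * ((2*(l:ℝ)+1)^(1+2*γ) * C l) := by
    intro l
    have ha : (0:ℝ) < 2*(l:ℝ)+1 := by positivity
    have hS : (0:ℝ) ≤ (Afun c D k l t)^2 + (Bfun c D k l t)^2 := by positivity
    have hz0 : (0:ℝ) ≤ 1 - legendreP l x := by
      have := abs_le.mp (legendreP_abs_le l x hx)
      linarith [this.2]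
    have hz := legendre_est l γ hγ0 hγ1 x hx
    have hES := hamp l t ht
    have hrpow : (2*(l:ℝ)+1)^(1+2*γ) = (2*(l:ℝ)+1) * (2*(l:ℝ)+1)^(2*γ) := by
      rw [Real.rpow_add ha, Real.rpow_one]
    calc Real.exp (-c^2*t/D) * ((2*(l:ℝ)+1) * C l *
            ((Afun c D k l t)^2 + (Bfun c D k l t)^2) * (1 - legendreP l x))
        = ((2*(l:ℝ)+1) * C l) *
            ((Real.exp (-c^2*t/D) * ((Afun c D k l t)^2 + (Bfun c D k l t)^2))
              * (1 - legendreP l x)) := by ring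
      _ ≤ ((2*(l:ℝ)+1) * C l) * (M * (2 * (2*(l:ℝ)+1)^(2*γ) * (1-x)^γ)) := by
          apply mul_le_mul_of_nonneg_left _ (mul_nonneg (le_of_lt ha) (hC l))
          have t1 : (Real.exp (-c^2*t/D) * ((Afun c D k l t)^2 + (Bfun c D k l t)^2))
              * (1 - legendreP l x) ≤ M * (1 - legendreP l x) :=
            mul_le_mul_of_nonneg_right hES hz0
          have t2 : M * (1 - legendreP l x) ≤ M * (2 * (2*(l:ℝ)+1)^(2*γ) * (1-x)^γ) :=
            mul_le_mul_of_nonneg_left hz (le_of_lt hM)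
          exact le_trans t1 t2
      _ = (2*M * (1-x)^γ) * (((2*(l:ℝ)+1) * (2*(l:ℝ)+1)^(2*γ)) * C l) := by ring
      _ = (2*M * (1-x)^γ) * ((2*(l:ℝ)+1)^(1+2*γ) * C l) := by rw [hrpow]
  have hnn : ∀ l : ℕ, (0:ℝ) ≤ Real.exp (-c^2*t/D) * ((2*(l:ℝ)+1) * C l *
      ((Afun c D k l t)^2 + (Bfun c D k l t)^2) * (1 - legendreP l x)) := by
    intro l
    have ha : (0:ℝ) ≤ 2*(l:ℝ)+1 := by positivity
    have hS : (0:ℝ) ≤ (Afun c D k l t)^2 + (Bfun c D k l t)^2 := by positivity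
    have hz0 : (0:ℝ) ≤ 1 - legendreP l x := by
      have := abs_le.mp (legendreP_abs_le l x hx)
      linarith [this.2]
    exact mul_nonneg (le_of_lt hEpos)
      (mul_nonneg (mul_nonneg (mul_nonneg ha (hC l)) hS) hz0)
  have hg : Summable (fun l : ℕ => (2*M * (1-x)^γ) * ((2*(l:ℝ)+1)^(1+2*γ) * C l)) :=
    hsum.mul_left _
  have hf : Summable (fun l : ℕ => Real.exp (-c^2*t/D) * ((2*(l:ℝ)+1) * C l *
      ((Afun c D k l t)^2 + (Bfun c D k l t)^2) * (1 - legendreP l x))) :=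
    Summable.of_nonneg_of_le hnn hterm hg
  rw [← tsum_mul_left]
  calc ∑' l : ℕ, Real.exp (-c^2*t/D) * ((2*(l:ℝ)+1) * C l *
        ((Afun c D k l t)^2 + (Bfun c D k l t)^2) * (1 - legendreP l x))
      ≤ ∑' l : ℕ, (2*M * (1-x)^γ) * ((2*(l:ℝ)+1)^(1+2*γ) * C l) :=
        Summable.tsum_le_tsum hterm hf hg
    _ = (2*M * (1-x)^γ) * ∑' l : ℕ, (2*(l:ℝ)+1)^(1+2*γ) * C l := tsum_mul_left
    _ = 2*M * (1-x)^γ * ∑' l : ℕ, (2*(l:ℝ)+1)^(1+2*γ) * C l := by ring
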